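/- For every integer k ≥ 1, every real t ≥ 1/√(2πe), every h > 0 and all vectors (a_0,…,a_k), (b_0,…,b_k) ∈ ℝ^{k+1}, one has | det((p_t(a_i, b_j))_{i,j=0}^{k}) − (2h)^{−(k+1)} ∫_{−h}^{h} ⋯ ∫_{−h}^{h} det((p_t(a_i + s_i, b_j))_{i,j=0}^{k}) ds_0 ⋯ ds_k | ≤ 2h(k+1)² · k!. -/

import Mathlib

open MeasureTheory

/-- The one-dimensional heat kernel `p_t(a,b)`. -/
noncomputable def heatK (t a b : ℝ) : ℝ :=
    (Real.sqrt (2 * Real.pi * t))⁻¹ * Real.exp (-(a - b) ^ 2 / (2 * t))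

lemma tpos {t : ℝ} (ht : (Real.sqrt (2 * Real.pi * Real.exp 1))⁻¹ ≤ t) : 0 < t := by
  have : 0 < (Real.sqrt (2 * Real.pi * Real.exp 1))⁻¹ := by
    have : 0 < Real.sqrt (2 * Real.pi * Real.exp 1) := Real.sqrt_pos.mpr (by positivity)
    positivity
  linarith

lemma one_le_two_pi_t {t : ℝ} (ht : (Real.sqrt (2 * Real.pi * Real.exp 1))⁻¹ ≤ t) :
    1 ≤ 2 * Real.pi * t := by
  have hs : Real.sqrt (2 * Real.pi * Real.exp 1) ≤ 2 * Real.pi := by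
    have h1 : 2 * Real.pi * Real.exp 1 ≤ (2 * Real.pi) ^ 2 := by
      nlinarith [Real.pi_gt_three, Real.exp_one_lt_d9]
    calc Real.sqrt (2 * Real.pi * Real.exp 1) ≤ Real.sqrt ((2 * Real.pi) ^ 2) :=
          Real.sqrt_le_sqrt h1
      _ = 2 * Real.pi := Real.sqrt_sq (by positivity)
  have hspos : 0 < Real.sqrt (2 * Real.pi * Real.exp 1) := Real.sqrt_pos.mpr (by positivity)
  have h2 : Real.sqrt (2 * Real.pi * Real.exp 1) * (Real.sqrt (2 * Real.pi * Real.exp 1))⁻¹ = 1 :=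
    mul_inv_cancel₀ (ne_of_gt hspos)
  have ht0 : 0 < t := tpos ht
  nlinarith [mul_le_mul_of_nonneg_left ht hspos.le]

lemma heatK_nonneg (t a b : ℝ) : 0 ≤ heatK t a b := by
  unfold heatK
  positivity

lemma heatK_le_one {t : ℝ} (ht : (Real.sqrt (2 * Real.pi * Real.exp 1))⁻¹ ≤ t) (a b : ℝ) :
    heatK t a b ≤ 1 := by
  have h1 : 1 ≤ Real.sqrt (2 * Real.pi * t) := by
    rw [show (1 : ℝ) = Real.sqrt 1 by simp]
    exact Real.sqrt_le_sqrt (one_le_two_pi_t ht)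
  have h2 : (Real.sqrt (2 * Real.pi * t))⁻¹ ≤ 1 := by
    rw [inv_le_one_iff₀]; right; exact h1
  have h3 : Real.exp (-(a - b) ^ 2 / (2 * t)) ≤ 1 := by
    rw [Real.exp_le_one_iff]
    have := tpos ht
    have : 0 ≤ (a - b) ^ 2 := sq_nonneg _
    apply div_nonpos_of_nonpos_of_nonneg <;> nlinarith
  calc heatK t a b ≤ (Real.sqrt (2 * Real.pi * t))⁻¹ * 1 := by
        unfold heatK
        apply mul_le_mul_of_nonneg_left h3
        positivity
    _ ≤ 1 := by rw [mul_one]; exact h2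

lemma heatK_lip {t : ℝ} (ht : (Real.sqrt (2 * Real.pi * Real.exp 1))⁻¹ ≤ t) (b x y : ℝ) :
    |heatK t x b - heatK t y b| ≤ |x - y| := by
  have t0 : 0 < t := tpos ht
  set c := (Real.sqrt (2 * Real.pi * t))⁻¹ with hc
  have H : ∀ z : ℝ, HasDerivAt (fun w => heatK t w b)
      (c * (Real.exp (-(z - b) ^ 2 / (2 * t)) * (-(z - b) / t))) z := by
    intro z
    have h1 : HasDerivAt (fun w : ℝ => -(w - b) ^ 2 / (2 * t)) (-(z - b) / t) z := by
      have h0 := (((hasDerivAt_id z).sub_const b).pow 2).neg.div_const (2 * t)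
      refine h0.congr_deriv ?_
      simp only [id]
      field_simp
      ring
    have h2 := (h1.exp).const_mul c
    exact h2
  -- bound on the derivative
  have hbound : ∀ z : ℝ, ‖c * (Real.exp (-(z - b) ^ 2 / (2 * t)) * (-(z - b) / t))‖ ≤ 1 := by
    intro z
    set u := z - b with hu
    have hst : 0 < Real.sqrt t := Real.sqrt_pos.mpr t0
    set v := |u| / Real.sqrt t with hv
    have hv0 : 0 ≤ v := by positivity
    have hv2 : v ^ 2 = u ^ 2 / t := by
      rw [hv, div_pow, Real.sq_sqrt t0.le, sq_abs]
    have huv : |u| = Real.sqrt t * v := by rw [hv]; field_simp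
    have key : v * Real.exp (-(v ^ 2) / 2) ≤ Real.exp (-(1 : ℝ) / 2) := by
      have h1 : v ≤ Real.exp ((v ^ 2 - 1) / 2) := by
        have h2 := Real.add_one_le_exp ((v ^ 2 - 1) / 2)
        nlinarith [sq_nonneg (v - 1)]
      calc v * Real.exp (-(v ^ 2) / 2)
          ≤ Real.exp ((v ^ 2 - 1) / 2) * Real.exp (-(v ^ 2) / 2) :=
            mul_le_mul_of_nonneg_right h1 (Real.exp_pos _).le
        _ = Real.exp (-(1 : ℝ) / 2) := by rw [← Real.exp_add]; ring_nf
    have hexp_eq : -u ^ 2 / (2 * t) = -(v ^ 2) / 2 := by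
      rw [hv2]; ring
    have key2 : |u| * Real.exp (-u ^ 2 / (2 * t)) ≤ Real.sqrt t * Real.exp (-(1 : ℝ) / 2) := by
      rw [hexp_eq, huv, mul_assoc]
      exact mul_le_mul_of_nonneg_left key hst.le
    -- c = (sqrt(2π) * sqrt t)⁻¹
    have hcc : c = (Real.sqrt (2 * Real.pi) * Real.sqrt t)⁻¹ := by
      rw [hc, Real.sqrt_mul (by positivity)]
    have hfin : Real.exp (-(1 : ℝ) / 2) ≤ Real.sqrt (2 * Real.pi) * t := by
      have he : Real.sqrt (Real.exp 1) = Real.exp (2⁻¹ : ℝ) := by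
        rw [show Real.exp 1 = Real.exp (2⁻¹ : ℝ) * Real.exp (2⁻¹ : ℝ) by
          rw [← Real.exp_add]; norm_num]
        exact Real.sqrt_mul_self (Real.exp_pos _).le
      have hsplit : Real.sqrt (2 * Real.pi * Real.exp 1)
          = Real.sqrt (2 * Real.pi) * Real.exp (2⁻¹ : ℝ) := by
        rw [Real.sqrt_mul (by positivity), he]
      have h2pi : 0 < Real.sqrt (2 * Real.pi) := Real.sqrt_pos.mpr (by positivity)
      have := ht
      rw [hsplit, mul_inv] at this
      have h3 : (Real.exp (2⁻¹ : ℝ))⁻¹ = Real.exp (-(1 : ℝ) / 2) := by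
        rw [← Real.exp_neg]; norm_num
      rw [h3] at this
      calc Real.exp (-(1 : ℝ) / 2)
          = Real.sqrt (2 * Real.pi) * ((Real.sqrt (2 * Real.pi))⁻¹ * Real.exp (-(1:ℝ)/2)) := by
            field_simp
        _ ≤ Real.sqrt (2 * Real.pi) * t := mul_le_mul_of_nonneg_left this h2pi.le
    rw [Real.norm_eq_abs, abs_mul, abs_mul, abs_div, abs_neg,
      Real.abs_exp, abs_of_pos t0]
    have hc0 : |c| = c := abs_of_pos (by rw [hcc]; positivity)
    rw [hc0, hcc]
    calc (Real.sqrt (2 * Real.pi) * Real.sqrt t)⁻¹ *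
          (Real.exp (-u ^ 2 / (2 * t)) * (|u| / t))
          = (|u| * Real.exp (-u ^ 2 / (2 * t))) /
              (Real.sqrt (2 * Real.pi) * Real.sqrt t * t) := by ring
        _ ≤ (Real.sqrt t * Real.exp (-(1 : ℝ) / 2)) /
              (Real.sqrt (2 * Real.pi) * Real.sqrt t * t) := by
            gcongr
        _ = Real.exp (-(1 : ℝ) / 2) / (Real.sqrt (2 * Real.pi) * t) := by
            field_simp
        _ ≤ 1 := by
            rw [div_le_one (by positivity)]
            exact hfin
  have := Convex.norm_image_sub_le_of_norm_deriv_le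
    (f := fun w => heatK t w b) (s := Set.univ)
    (fun z _ => (H z).differentiableAt)
    (fun z _ => by rw [(H z).deriv]; exact hbound z)
    convex_univ (Set.mem_univ y) (Set.mem_univ x)
  simpa [Real.norm_eq_abs] using this

lemma abs_prod_sub_prod_le {ι : Type*} [DecidableEq ι] (s : Finset ι) (f g : ι → ℝ) (ε : ℝ)
    (hε : 0 ≤ ε) (hf : ∀ i, |f i| ≤ 1) (hg : ∀ i, |g i| ≤ 1) (hfg : ∀ i, |f i - g i| ≤ ε) :
    |∏ i ∈ s, f i - ∏ i ∈ s, g i| ≤ s.card * ε := by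
  induction s using Finset.induction with
  | empty => simp
  | @insert a s ha ih =>
    rw [Finset.prod_insert ha, Finset.prod_insert ha, Finset.card_insert_of_notMem ha]
    have hpf : |∏ i ∈ s, f i| ≤ 1 := by
      rw [Finset.abs_prod]
      exact Finset.prod_le_one (fun i _ => abs_nonneg _) (fun i _ => hf i)
    have key : f a * ∏ i ∈ s, f i - g a * ∏ i ∈ s, g i
        = (f a - g a) * ∏ i ∈ s, f i + g a * (∏ i ∈ s, f i - ∏ i ∈ s, g i) := by ring
    rw [key]
    calc |(f a - g a) * ∏ i ∈ s, f i + g a * (∏ i ∈ s, f i - ∏ i ∈ s, g i)|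
        ≤ |(f a - g a)| * |∏ i ∈ s, f i| + |g a| * |∏ i ∈ s, f i - ∏ i ∈ s, g i| := by
          rw [← abs_mul, ← abs_mul]; exact abs_add_le _ _
      _ ≤ ε * 1 + 1 * (s.card * ε) :=
          add_le_add (mul_le_mul (hfg a) hpf (abs_nonneg _) hε)
            (mul_le_mul (hg a) ih (abs_nonneg _) zero_le_one)
      _ = ((s.card + 1 : ℕ) : ℝ) * ε := by push_cast; ring

lemma abs_det_sub_det_le {n : ℕ} (A B : Matrix (Fin n) (Fin n) ℝ) (ε : ℝ) (hε : 0 ≤ ε)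
    (hA : ∀ i j, |A i j| ≤ 1) (hB : ∀ i j, |B i j| ≤ 1) (hAB : ∀ i j, |A i j - B i j| ≤ ε) :
    |A.det - B.det| ≤ (n.factorial : ℝ) * ((n : ℝ) * ε) := by
  rw [Matrix.det_apply, Matrix.det_apply, ← Finset.sum_sub_distrib]
  have hterm : ∀ σ : Equiv.Perm (Fin n),
      |Equiv.Perm.sign σ • ∏ i, A (σ i) i - Equiv.Perm.sign σ • ∏ i, B (σ i) i|
        ≤ (n : ℝ) * ε := by
    intro σ
    rw [← smul_sub]
    have habs : |Equiv.Perm.sign σ • (∏ i, A (σ i) i - ∏ i, B (σ i) i)|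
        = |∏ i, A (σ i) i - ∏ i, B (σ i) i| := by
      rcases Int.units_eq_one_or (Equiv.Perm.sign σ) with hσ | hσ <;>
        simp [hσ, Units.smul_def, abs_sub_comm]
    rw [habs]
    have := abs_prod_sub_prod_le (Finset.univ : Finset (Fin n))
      (fun i => A (σ i) i) (fun i => B (σ i) i) ε hε
      (fun i => hA _ _) (fun i => hB _ _) (fun i => hAB _ _)
    simpa using this
  calc |∑ σ : Equiv.Perm (Fin n),
        (Equiv.Perm.sign σ • ∏ i, A (σ i) i - Equiv.Perm.sign σ • ∏ i, B (σ i) i)|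
      ≤ ∑ σ : Equiv.Perm (Fin n),
        |Equiv.Perm.sign σ • ∏ i, A (σ i) i - Equiv.Perm.sign σ • ∏ i, B (σ i) i| :=
        Finset.abs_sum_le_sum_abs _ _
    _ ≤ ∑ _σ : Equiv.Perm (Fin n), (n : ℝ) * ε := Finset.sum_le_sum fun σ _ => hterm σ
    _ = (n.factorial : ℝ) * ((n : ℝ) * ε) := by
        rw [Finset.sum_const, Finset.card_univ, Fintype.card_perm, Fintype.card_fin,
          nsmul_eq_mul]

theorem det_average_bound (k : ℕ) (hk : 1 ≤ k) (t : ℝ)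
    (ht : (Real.sqrt (2 * Real.pi * Real.exp 1))⁻¹ ≤ t) (h : ℝ) (hh : 0 < h)
    (a b : Fin (k + 1) → ℝ) :
    |Matrix.det (Matrix.of fun i j : Fin (k + 1) => heatK t (a i) (b j)) -
        (2 * h) ^ (-((k : ℤ) + 1)) *
          ∫ s in (Set.Icc (fun _ => -h) (fun _ => h) : Set (Fin (k + 1) → ℝ)),
            Matrix.det (Matrix.of fun i j : Fin (k + 1) => heatK t (a i + s i) (b j))| ≤
      2 * h * ((k : ℝ) + 1) ^ 2 * (Nat.factorial k : ℝ) := by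
  have t0 : 0 < t := tpos ht
  set B : Set (Fin (k + 1) → ℝ) := Set.Icc (fun _ => -h) (fun _ => h) with hB
  set A : ℝ := Matrix.det (Matrix.of fun i j : Fin (k + 1) => heatK t (a i) (b j)) with hA
  set F : (Fin (k + 1) → ℝ) → ℝ :=
    fun s => Matrix.det (Matrix.of fun i j : Fin (k + 1) => heatK t (a i + s i) (b j)) with hF
  have hcont : Continuous F := by
    apply Continuous.matrix_det
    apply continuous_matrix
    intro i j
    simp only [Matrix.of_apply, heatK]
    fun_prop
  have hcompact : IsCompact B := isCompact_Icc
  have hvol : (volume B).toReal = (2 * h) ^ (k + 1) := by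
    rw [hB, Real.volume_Icc_pi_toReal (fun i => by simp; linarith)]
    simp [two_mul]
  have hvolfin : volume B < ⊤ := hcompact.measure_lt_top
  have hInt : IntegrableOn F B := hcont.continuousOn.integrableOn_compact hcompact
  have hIntC : IntegrableOn (fun _ : Fin (k + 1) → ℝ => A) B :=
    integrableOn_const hvolfin.ne
  set C : ℝ := ((k + 1).factorial : ℝ) * ((((k : ℝ)) + 1) * h) with hC
  have hCnn : 0 ≤ C := by positivity
  have hpt : ∀ s ∈ B, |A - F s| ≤ C := by
    intro s hs
    rw [hA, hF, hC]
    have := abs_det_sub_det_le (Matrix.of fun i j : Fin (k + 1) => heatK t (a i) (b j))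
      (Matrix.of fun i j : Fin (k + 1) => heatK t (a i + s i) (b j)) h hh.le
      (fun i j => by
        simp only [Matrix.of_apply]
        rw [abs_of_nonneg (heatK_nonneg _ _ _)]
        exact heatK_le_one ht _ _)
      (fun i j => by
        simp only [Matrix.of_apply]
        rw [abs_of_nonneg (heatK_nonneg _ _ _)]
        exact heatK_le_one ht _ _)
      (fun i j => by
        simp only [Matrix.of_apply]
        refine (heatK_lip ht (b j) (a i) (a i + s i)).trans ?_
        rw [show a i - (a i + s i) = -(s i) by ring, abs_neg, abs_le]
        rw [hB, Set.mem_Icc] at hs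
        exact ⟨hs.1 i, hs.2 i⟩)
    refine this.trans ?_
    push_cast
    ring_nf
    exact le_rfl
  have hv0 : (0 : ℝ) < (2 * h) ^ (k + 1) := by positivity
  have hz : (2 * h) ^ (-((k : ℤ) + 1)) = ((2 * h) ^ (k + 1) : ℝ)⁻¹ := by
    rw [show -((k : ℤ) + 1) = -((k + 1 : ℕ) : ℤ) by push_cast; ring,
      zpow_neg, zpow_natCast]
  have hIdiff : ∫ s in B, (A - F s) = (2 * h) ^ (k + 1) * A - ∫ s in B, F s := by
    rw [integral_sub hIntC hInt, setIntegral_const, measureReal_def, hvol, smul_eq_mul]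
  have hnorm : |∫ s in B, (A - F s)| ≤ C * (2 * h) ^ (k + 1) := by
    rw [← Real.norm_eq_abs, ← hvol]
    exact norm_setIntegral_le_of_norm_le_const hvolfin
      (fun s hs => by simpa using hpt s hs)
  have hmain : A - (2 * h) ^ (-((k : ℤ) + 1)) * ∫ s in B, F s
      = ((2 * h) ^ (k + 1) : ℝ)⁻¹ * ∫ s in B, (A - F s) := by
    rw [hz, hIdiff]
    field_simp
  rw [hmain, abs_mul, abs_of_pos (inv_pos.mpr hv0)]
  calc ((2 * h) ^ (k + 1) : ℝ)⁻¹ * |∫ s in B, (A - F s)|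
      ≤ ((2 * h) ^ (k + 1) : ℝ)⁻¹ * (C * (2 * h) ^ (k + 1)) :=
        mul_le_mul_of_nonneg_left hnorm (inv_pos.mpr hv0).le
    _ = C := by field_simp
    _ ≤ 2 * h * ((k : ℝ) + 1) ^ 2 * (Nat.factorial k : ℝ) := by
        rw [hC, Nat.factorial_succ]
        push_cast
        have hpos : 0 ≤ ((k : ℝ) + 1) ^ 2 * (k.factorial : ℝ) * h := by positivity
        nlinarith [hpos]
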